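/- Let Q be an n×n real symmetric positive definite matrix, let A be an m×n real matrix of full row rank (A is surjective), and let B be a p×n real matrix with Range(Bᵀ) = Ker(A). Then A Q Aᵀ is invertible, and for all u, λ ∈ ℝⁿ, setting μ := λ + Q u, the pair of transmission conditions (B u = 0 and A λ = 0) holds if and only if Aᵀ (A Q Aᵀ)⁻¹ A μ = u. -/

import Mathlib

open Matrix

lemma aux_transpose_inj {n m : Type*} [Fintype n] [Fintype m]
    (A : Matrix m n ℝ) (hA : Function.Surjective A.mulVec) :
    ∀ x : m → ℝ, Aᵀ *ᵥ x = 0 → x = 0 := by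
  intro x hx
  obtain ⟨y, hy⟩ := hA x
  have h : x ⬝ᵥ x = 0 := by
    calc x ⬝ᵥ x = x ⬝ᵥ (A *ᵥ y) := by rw [hy]
    _ = (x ᵥ* A) ⬝ᵥ y := dotProduct_mulVec _ _ _
    _ = (Aᵀ *ᵥ x) ⬝ᵥ y := by rw [mulVec_transpose]
    _ = 0 := by rw [hx, zero_dotProduct]
  simpa [dotProduct_self_eq_zero] using h

lemma aux_posdef {n m : Type*} [Fintype n] [Fintype m]
    (Q : Matrix n n ℝ) (A : Matrix m n ℝ)
    (hQsym : Qᵀ = Q) (hQ : Q.PosDef)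
    (hA : Function.Surjective A.mulVec) : (A * Q * Aᵀ).PosDef := by
  rw [posDef_iff_dotProduct_mulVec]
  constructor
  · show (A * Q * Aᵀ)ᴴ = _
    rw [conjTranspose_eq_transpose_of_trivial, Matrix.transpose_mul, Matrix.transpose_mul,
      Matrix.transpose_transpose, hQsym, Matrix.mul_assoc]
  · intro x hx
    have hAx : Aᵀ *ᵥ x ≠ 0 := fun h => hx (aux_transpose_inj A hA x h)
    have h := hQ.dotProduct_mulVec_pos hAx
    have hstar : star (Aᵀ *ᵥ x) = Aᵀ *ᵥ x := by
      simp
    rw [hstar] at h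
    have key : x ⬝ᵥ ((A * Q * Aᵀ) *ᵥ x) = (Aᵀ *ᵥ x) ⬝ᵥ (Q *ᵥ (Aᵀ *ᵥ x)) := by
      simp only [← mulVec_mulVec, dotProduct_mulVec, mulVec_transpose, vecMul_vecMul]
    have hx' : star x = x := by simp
    rw [hx', key]
    exact h

/-- If `Q` is symmetric positive definite, `A` has full row rank, and
`Range(Bᵀ) = Ker(A)`, then `A Q Aᵀ` is invertible and, for `μ = λ + Q u`, the
transmission conditions `B u = 0 ∧ A λ = 0` hold iff `Aᵀ (A Q Aᵀ)⁻¹ A μ = u`. -/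
theorem stmt_4 {n m p : Type*} [Fintype n] [Fintype m] [Fintype p]
    [DecidableEq n] [DecidableEq m] [DecidableEq p]
    (Q : Matrix n n ℝ) (A : Matrix m n ℝ) (B : Matrix p n ℝ)
    (hQsym : Qᵀ = Q) (hQ : Q.PosDef)
    (hA : Function.Surjective A.mulVec)
    (hB : LinearMap.range Bᵀ.mulVecLin = LinearMap.ker A.mulVecLin) :
    IsUnit (A * Q * Aᵀ) ∧
    ∀ u lam : n → ℝ,
      (B *ᵥ u = 0 ∧ A *ᵥ lam = 0) ↔
        (Aᵀ * (A * Q * Aᵀ)⁻¹ * A) *ᵥ (lam + Q *ᵥ u) = u := by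
  have hU : IsUnit (A * Q * Aᵀ) := (aux_posdef Q A hQsym hQ hA).isUnit
  have hdet : IsUnit (A * Q * Aᵀ).det := (isUnit_iff_isUnit_det _).1 hU
  have hinv1 : (A * Q * Aᵀ) * (A * Q * Aᵀ)⁻¹ = 1 := mul_nonsing_inv _ hdet
  have hinv2 : (A * Q * Aᵀ)⁻¹ * (A * Q * Aᵀ) = 1 := nonsing_inv_mul _ hdet
  have hABt : ∀ v : p → ℝ, A *ᵥ (Bᵀ *ᵥ v) = 0 := by
    intro v
    have hv : Bᵀ *ᵥ v ∈ LinearMap.ker A.mulVecLin := by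
      rw [← hB]; exact ⟨v, rfl⟩
    simpa using hv
  have hBAt : B * Aᵀ = 0 := by
    ext i j
    have h0 := hABt (Pi.single i 1)
    have hcol : Bᵀ *ᵥ Pi.single i 1 = fun j' => B i j' := by
      ext j'
      simp [mulVec, dotProduct, Pi.single_apply]
    rw [hcol] at h0
    have h1 := congrFun h0 j
    simpa [Matrix.mul_apply, mulVec, dotProduct, mul_comm] using h1
  have hperp : ∀ u : n → ℝ, B *ᵥ u = 0 → ∀ w, A *ᵥ w = 0 → u ⬝ᵥ w = 0 := by
    intro u hu w hw
    have hw' : w ∈ LinearMap.range Bᵀ.mulVecLin := by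
      rw [hB]; simpa using hw
    obtain ⟨y, hy⟩ := hw'
    have hy' : Bᵀ *ᵥ y = w := hy
    calc u ⬝ᵥ w = u ⬝ᵥ (Bᵀ *ᵥ y) := by rw [hy']
    _ = (u ᵥ* Bᵀ) ⬝ᵥ y := dotProduct_mulVec _ _ _
    _ = (B *ᵥ u) ⬝ᵥ y := by rw [vecMul_transpose]
    _ = 0 := by rw [hu, zero_dotProduct]
  have hU1 : IsUnit (A * (1 : Matrix n n ℝ) * Aᵀ) :=
    (aux_posdef 1 A (by simp) Matrix.PosDef.one hA).isUnit
  have hU1' : IsUnit (A * Aᵀ) := by simpa using hU1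
  have hdet1 : IsUnit (A * Aᵀ).det := (isUnit_iff_isUnit_det _).1 hU1'
  have hN : (A * Aᵀ) * (A * Aᵀ)⁻¹ = 1 := mul_nonsing_inv _ hdet1
  have hrange : ∀ u : n → ℝ, B *ᵥ u = 0 → ∃ z, Aᵀ *ᵥ z = u := by
    intro u hu
    refine ⟨(A * Aᵀ)⁻¹ *ᵥ (A *ᵥ u), ?_⟩
    set z : m → ℝ := (A * Aᵀ)⁻¹ *ᵥ (A *ᵥ u) with hz
    have hAz : A *ᵥ (Aᵀ *ᵥ z) = A *ᵥ u := by
      rw [hz, mulVec_mulVec, mulVec_mulVec, mulVec_mulVec, hN, Matrix.one_mul]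
    set v : n → ℝ := u - Aᵀ *ᵥ z with hv
    have hAv : A *ᵥ v = 0 := by
      rw [hv, mulVec_sub, hAz, sub_self]
    have h1 : u ⬝ᵥ v = 0 := hperp u hu v hAv
    have h2 : (Aᵀ *ᵥ z) ⬝ᵥ v = 0 := by
      calc (Aᵀ *ᵥ z) ⬝ᵥ v = (z ᵥ* A) ⬝ᵥ v := by rw [mulVec_transpose]
      _ = z ⬝ᵥ (A *ᵥ v) := (dotProduct_mulVec _ _ _).symm
      _ = 0 := by rw [hAv, dotProduct_zero]
    have hvv : v ⬝ᵥ v = 0 := by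
      have hsplit : v ⬝ᵥ v = u ⬝ᵥ v - (Aᵀ *ᵥ z) ⬝ᵥ v := by
        rw [hv, sub_dotProduct]
      rw [hsplit, h1, h2, sub_zero]
    have hv0 : v = 0 := by simpa [dotProduct_self_eq_zero] using hvv
    rw [hv] at hv0
    exact (sub_eq_zero.mp hv0).symm
  have hAQ : Aᵀ * (A * Q * Aᵀ)⁻¹ * A * Q * Aᵀ = Aᵀ := by
    calc Aᵀ * (A * Q * Aᵀ)⁻¹ * A * Q * Aᵀ
        = Aᵀ * ((A * Q * Aᵀ)⁻¹ * (A * Q * Aᵀ)) := by simp only [Matrix.mul_assoc]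
    _ = Aᵀ := by rw [hinv2, Matrix.mul_one]
  have hQA : A * Q * (Aᵀ * (A * Q * Aᵀ)⁻¹ * A) = A := by
    calc A * Q * (Aᵀ * (A * Q * Aᵀ)⁻¹ * A)
        = A * Q * Aᵀ * (A * Q * Aᵀ)⁻¹ * A := by
          simp only [Matrix.mul_assoc]
    _ = A := by rw [hinv1, Matrix.one_mul]
  refine ⟨hU, fun u lam => ?_⟩
  constructor
  · rintro ⟨hu, hlam⟩
    obtain ⟨z, hz⟩ := hrange u hu
    have hsplit : (Aᵀ * (A * Q * Aᵀ)⁻¹ * A) *ᵥ (lam + Q *ᵥ u)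
        = (Aᵀ * (A * Q * Aᵀ)⁻¹) *ᵥ (A *ᵥ lam)
          + (Aᵀ * (A * Q * Aᵀ)⁻¹ * A * Q * Aᵀ) *ᵥ z := by
      rw [mulVec_add]
      congr 1
      · rw [mulVec_mulVec]
      · rw [← hz, mulVec_mulVec, mulVec_mulVec]
    rw [hsplit, hlam, mulVec_zero, zero_add, hAQ, hz]
  · intro h
    have huB : B *ᵥ u = 0 := by
      have hform : u = Aᵀ *ᵥ (((A * Q * Aᵀ)⁻¹ * A) *ᵥ (lam + Q *ᵥ u)) := by
        rw [mulVec_mulVec, ← Matrix.mul_assoc, h]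
      rw [hform, mulVec_mulVec, hBAt, zero_mulVec]
    refine ⟨huB, ?_⟩
    have hQu : A *ᵥ (Q *ᵥ u) = A *ᵥ (lam + Q *ᵥ u) := by
      conv_lhs => rw [← h]
      rw [mulVec_mulVec, mulVec_mulVec, hQA]
    have hlam : A *ᵥ lam = A *ᵥ (lam + Q *ᵥ u) - A *ᵥ (Q *ᵥ u) := by
      rw [mulVec_add]; abel
    rw [hlam, ← hQu, sub_self]
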